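/- Let V be a vector space over a field F, λ, μ : V → V linear maps, s ∈ V, and consider the abelian Leibniz algebra on V (zero bracket) with bi-affine bracket {a,b} = λ(a) + μ(b) + s and Leibnizian Λ(a,b,c) = {a,{b,c}} − {{a,b},c} + {{a,c},b}. Then Λ(a,b,c) = {a,{b,b}} for all a, b, c ∈ V (homogeneity) if and only if (μ + λ − id) ∘ μ = 0. -/
import Mathlib


/-- For the abelian Leibniz algebra on a vector space `V` (zero bracket) with bi-affine
bracket `{a,b} = lam a + mu b + s` and Leibnizian
`Λ(a,b,c) = {a,{b,c}} − {{a,b},c} + {{a,c},b}`, homogeneity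
(`Λ(a,b,c) = {a,{b,b}}` for all `a b c`) holds if and only if
`(mu + lam − id) ∘ mu = 0`. -/
theorem homogeneous_abelian_fibre_characterization
    {F V : Type*} [Field F] [AddCommGroup V] [Module F V]
    (lam mu : V →ₗ[F] V) (s : V)
    (br : V → V → V) (hbr : ∀ a b, br a b = lam a + mu b + s)
    (Λ : V → V → V → V)
    (hΛ : ∀ a b c, Λ a b c = br a (br b c) - br (br a b) c + br (br a c) b) :
    (∀ a b c : V, Λ a b c = br a (br b b)) ↔
      (mu + lam - LinearMap.id) ∘ₗ mu = 0 := by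
  constructor
  · intro h
    ext x
    have := h 0 0 x
    simp only [hΛ, hbr, map_zero, map_add, zero_add, add_zero] at this
    simp only [LinearMap.comp_apply, LinearMap.sub_apply, LinearMap.add_apply,
      LinearMap.id_apply, LinearMap.zero_apply]
    abel_nf at this ⊢
    linear_combination (norm := abel) this
  · intro h a b c
    have key : ∀ x : V, mu (mu x) + lam (mu x) - mu x = 0 := by
      intro x
      have := congrArg (fun f => f x) h
      simpa [LinearMap.comp_apply, LinearMap.sub_apply, LinearMap.add_apply] using this
    simp only [hΛ, hbr, map_add]
    have hb := key b
    have hc := key c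
    linear_combination (norm := abel) hc - hb
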